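/- (Ginibre kernel comparison.) Let K_N(x,y) := π^{-1} e^{-(|x|²+|y|²)/2} ∑_{l=0}^{N-1} (x ȳ)^l / l! and K_∞(x,y) := π^{-1} e^{-|x|²/2 - |y|²/2 + x ȳ} for x, y ∈ ℂ. Then for every ε ∈ (0,1) there is a constant C such that for all N and all x, y with |x|, |y| ≤ √((1-ε)N), one has |K_N(x,y) - K_∞(x,y)| ≤ C exp(-ε² N / 2). -/

import Mathlib

noncomputable section

open scoped Real

/-- The finite-`N` Ginibre kernel `K_N(x,y) = π⁻¹ e^{-(|x|²+|y|²)/2} ∑_{l<N} (x ȳ)^l / l!`. -/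
def ginibreKernelN (N : ℕ) (x y : ℂ) : ℂ :=
  ((1 / Real.pi : ℝ) : ℂ) * Complex.exp (-((‖x‖ ^ 2 + ‖y‖ ^ 2) / 2 : ℝ)) *
    ∑ l ∈ Finset.range N, (x * (starRingEnd ℂ) y) ^ l / (l.factorial : ℂ)

/-- The limiting Ginibre kernel `K_∞(x,y) = π⁻¹ e^{-|x|²/2 - |y|²/2 + x ȳ}`. -/
def ginibreKernelInf (x y : ℂ) : ℂ :=
  ((1 / Real.pi : ℝ) : ℂ) *
    Complex.exp (((-‖x‖ ^ 2 / 2 - ‖y‖ ^ 2 / 2 : ℝ) : ℂ) +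
      x * (starRingEnd ℂ) y)

/-- Second-order logarithm inequality: `log (1-ε) ≤ -ε - ε²/2` on `[0,1)`. -/
lemma log_key (ε : ℝ) (h0 : 0 ≤ ε) (h1 : ε < 1) :
    Real.log (1 - ε) + ε + ε ^ 2 / 2 ≤ 0 := by
  set f : ℝ → ℝ := fun x => Real.log (1 - x) + x + x ^ 2 / 2 with hf
  have hanti : AntitoneOn f (Set.Ico (0 : ℝ) 1) := by
    have hder : ∀ x ∈ Set.Ioo (0 : ℝ) 1,
        HasDerivAt f ((1 - x)⁻¹ * (0 - 1) + 1 + 2 * x ^ 1 / 2) x := by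
      intro x hx
      have hne : (1 : ℝ) - x ≠ 0 := by
        have := hx.2; intro h; nlinarith
      have hlog : HasDerivAt (fun x : ℝ => Real.log (1 - x)) ((1 - x)⁻¹ * (0 - 1)) x :=
        (Real.hasDerivAt_log hne).comp x ((hasDerivAt_const x (1:ℝ)).sub (hasDerivAt_id x))
      exact (hlog.add (hasDerivAt_id x)).add ((hasDerivAt_pow 2 x).div_const 2)
    apply antitoneOn_of_deriv_nonpos (convex_Ico 0 1)
    · apply ContinuousOn.add
      apply ContinuousOn.add
      · apply ContinuousOn.log ((continuous_const.sub continuous_id).continuousOn)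
        intro x hx
        have := hx.2
        intro h; simp only [Pi.sub_apply, id] at h; nlinarith
      · exact continuous_id.continuousOn
      · exact (continuous_pow 2).continuousOn.div_const 2
    · rw [interior_Ico]
      intro x hx
      exact (hder x hx).differentiableAt.differentiableWithinAt
    · rw [interior_Ico]
      intro x hx
      rw [(hder x hx).deriv]
      have hpos : (0:ℝ) < 1 - x := by linarith [hx.2]
      have hinv : (1 - x) * (1 - x)⁻¹ = 1 := mul_inv_cancel₀ (ne_of_gt hpos)
      have hx0 := hx.1
      nlinarith [sq_nonneg x, mul_pos hpos (inv_pos.mpr hpos)]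
  have := hanti (Set.mem_Ico.mpr ⟨le_refl 0, one_pos⟩) (Set.mem_Ico.mpr ⟨h0, h1⟩) h0
  simpa [hf] using this

/-- Tail term bound: `s^(k+N)/(k+N)! ≤ (s^N/N!) c^k` whenever `0 ≤ s ≤ c N`. -/
lemma tail_term_bound (s c : ℝ) (hs : 0 ≤ s) (hc : 0 ≤ c) (N : ℕ) (hsc : s ≤ c * N) :
    ∀ k : ℕ, s ^ (k + N) / (k + N).factorial ≤ s ^ N / N.factorial * c ^ k := by
  intro k
  induction k with
  | zero => simp
  | succ k ih =>
    have hfac : (((k + 1 + N).factorial : ℕ) : ℝ)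
        = ((k + N : ℕ) + 1) * ((k + N).factorial : ℝ) := by
      rw [show k + 1 + N = (k + N) + 1 by omega, Nat.factorial_succ]
      push_cast; ring
    have hpow : s ^ (k + 1 + N) = s ^ (k + N) * s := by
      rw [show k + 1 + N = (k + N) + 1 by omega, pow_succ]
    have hd : s / ((k + N : ℕ) + 1) ≤ c := by
      rw [div_le_iff₀ (by positivity)]
      calc s ≤ c * N := hsc
        _ ≤ c * ((k + N : ℕ) + 1) := by
            apply mul_le_mul_of_nonneg_left _ hc
            push_cast; linarith
    calc s ^ (k + 1 + N) / ((k + 1 + N).factorial : ℝ)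
        = s ^ (k + N) / ((k + N).factorial : ℝ) * (s / ((k + N : ℕ) + 1)) := by
          have hfne : ((k + N).factorial : ℝ) ≠ 0 := by positivity
          rw [hpow, hfac]
          field_simp
          try ring
          try tauto
      _ ≤ s ^ N / (N.factorial : ℝ) * c ^ k * c :=
          mul_le_mul ih hd (by positivity) (by positivity)
      _ = s ^ N / (N.factorial : ℝ) * c ^ (k + 1) := by ring

set_option maxHeartbeats 1000000 in
/-- **Ginibre kernel comparison.** For every `ε ∈ (0,1)` there is a constant `C` such that
for all `N` and all `x, y` with `|x|, |y| ≤ √((1-ε)N)`,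
`|K_N(x,y) - K_∞(x,y)| ≤ C exp(-ε² N / 2)`. -/
theorem stmt13 :
    ∀ ε : ℝ, ε ∈ Set.Ioo (0 : ℝ) 1 → ∃ C : ℝ, 0 < C ∧
      ∀ (N : ℕ) (x y : ℂ),
        ‖x‖ ≤ Real.sqrt ((1 - ε) * N) →
        ‖y‖ ≤ Real.sqrt ((1 - ε) * N) →
        ‖ginibreKernelN N x y - ginibreKernelInf x y‖ ≤
          C * Real.exp (-(ε ^ 2) * N / 2) := by
  intro ε hε
  obtain ⟨hε0, hε1⟩ := hε
  have hπ : (0:ℝ) < Real.pi := Real.pi_pos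
  refine ⟨1 / (Real.pi * ε), by positivity, ?_⟩
  intro N x y hx hy
  rcases Nat.eq_zero_or_pos N with hN | hN
  · -- N = 0 : then x = y = 0
    subst hN
    have hx0 : x = 0 := by
      have h : ‖x‖ ≤ 0 := by simpa using hx
      exact norm_eq_zero.mp (le_antisymm h (norm_nonneg x))
    have hy0 : y = 0 := by
      have h : ‖y‖ ≤ 0 := by simpa using hy
      exact norm_eq_zero.mp (le_antisymm h (norm_nonneg y))
    subst hx0; subst hy0
    simp only [ginibreKernelN, ginibreKernelInf, Finset.range_zero, Finset.sum_empty,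
      mul_zero, map_zero, zero_mul, ne_eq, OfNat.ofNat_ne_zero, not_false_eq_true,
      zero_pow, neg_zero, zero_div, zero_sub, zero_add, Complex.ofReal_zero, sub_zero,
      Complex.exp_zero, mul_one, norm_neg, Nat.cast_zero, norm_zero, Complex.norm_real, Real.norm_eq_abs]
    have : |1 / Real.pi| = 1 / Real.pi := abs_of_pos (by positivity)
    rw [this]
    rw [Real.exp_zero, mul_one, div_le_div_iff₀ hπ (by positivity)]
    nlinarith
  · -- main case N ≥ 1
    set z := x * (starRingEnd ℂ) y with hz
    set s := ‖z‖ with hsdef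
    set a := (1 - ε) * (N : ℝ) with ha
    have h1ε : (0:ℝ) ≤ 1 - ε := by linarith
    have hNpos : (0:ℝ) < (N : ℝ) := by exact_mod_cast hN
    have hN1 : (1:ℝ) ≤ (N : ℝ) := by exact_mod_cast hN
    have ha0 : 0 ≤ a := mul_nonneg h1ε (Nat.cast_nonneg N)
    have haN : a ≤ (N : ℝ) := by nlinarith
    have hs0 : 0 ≤ s := norm_nonneg z
    have hsxy : s = ‖x‖ * ‖y‖ := by
      rw [hsdef, hz, norm_mul, Complex.norm_conj]
    have hsa : s ≤ a := by
      rw [hsxy]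
      calc ‖x‖ * ‖y‖
          ≤ Real.sqrt ((1 - ε) * N) * Real.sqrt ((1 - ε) * N) :=
            mul_le_mul hx hy (norm_nonneg y) (Real.sqrt_nonneg _)
        _ = a := Real.mul_self_sqrt ha0
    -- summability and exp expansion
    have hsum : Summable (fun n : ℕ => z ^ n / ((n.factorial : ℕ) : ℂ)) := by
      apply Summable.of_norm
      apply (Real.summable_pow_div_factorial s).congr
      intro n
      rw [norm_div, norm_pow]
      simp [hsdef]
    have hexp : Complex.exp z = ∑' n : ℕ, z ^ n / ((n.factorial : ℕ) : ℂ) := by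
      rw [Complex.exp_eq_exp_ℂ, NormedSpace.exp_eq_tsum_div]
    have htail : (∑ l ∈ Finset.range N, z ^ l / ((l.factorial : ℕ) : ℂ)) - Complex.exp z
        = -∑' k : ℕ, z ^ (k + N) / (((k + N).factorial : ℕ) : ℂ) := by
      have h := Summable.sum_add_tsum_nat_add (f := fun n : ℕ => z ^ n / ((n.factorial : ℕ) : ℂ)) N hsum
      rw [hexp, ← h]; ring
    -- tail bound
    have hgsum : Summable (fun k : ℕ => s ^ (k + N) / ((k + N).factorial : ℝ)) := by
      exact (summable_nat_add_iff N).mpr (Real.summable_pow_div_factorial s)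
    have hrsum : Summable (fun k : ℕ => s ^ N / (N.factorial : ℝ) * (1 - ε) ^ k) :=
      (summable_geometric_of_lt_one h1ε (by linarith)).mul_left _
    have htb : ∀ k : ℕ, s ^ (k + N) / ((k + N).factorial : ℝ)
        ≤ s ^ N / (N.factorial : ℝ) * (1 - ε) ^ k :=
      tail_term_bound s (1 - ε) hs0 h1ε N (by rw [← ha]; exact hsa)
    have habs_tail :
        ‖(∑ l ∈ Finset.range N, z ^ l / ((l.factorial : ℕ) : ℂ)) - Complex.exp z‖
        ≤ s ^ N / (N.factorial : ℝ) * ε⁻¹ := by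
      rw [htail, norm_neg]
      have h1 : ‖∑' k : ℕ, z ^ (k + N) / (((k + N).factorial : ℕ) : ℂ)‖
          ≤ ∑' k : ℕ, s ^ (k + N) / ((k + N).factorial : ℝ) := by
        have hns : Summable (fun k : ℕ => ‖z ^ (k + N) / (((k + N).factorial : ℕ) : ℂ)‖) := by
          apply hgsum.congr
          intro k
          rw [norm_div, norm_pow]
          simp [hsdef]
        refine le_trans (norm_tsum_le_tsum_norm hns) (le_of_eq (tsum_congr ?_))
        intro k
        rw [norm_div, norm_pow]
        simp [hsdef]
      have h2 : ∑' k : ℕ, s ^ (k + N) / ((k + N).factorial : ℝ)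
          ≤ ∑' k : ℕ, s ^ N / (N.factorial : ℝ) * (1 - ε) ^ k :=
        hgsum.tsum_le_tsum htb hrsum
      have h3 : ∑' k : ℕ, s ^ N / (N.factorial : ℝ) * (1 - ε) ^ k
          = s ^ N / (N.factorial : ℝ) * ε⁻¹ := by
        rw [tsum_mul_left, tsum_geometric_of_lt_one h1ε (by linarith)]
        norm_num
      linarith
    -- kernel difference
    have hdiff : ginibreKernelN N x y - ginibreKernelInf x y =
        ((1 / Real.pi : ℝ) : ℂ) *
          Complex.exp (-(((‖x‖) ^ 2 + (‖y‖) ^ 2) / 2 : ℝ)) *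
          ((∑ l ∈ Finset.range N, z ^ l / ((l.factorial : ℕ) : ℂ)) - Complex.exp z) := by
      rw [ginibreKernelN, ginibreKernelInf]
      rw [show (((-(‖x‖) ^ 2 / 2 - (‖y‖) ^ 2 / 2 : ℝ) : ℂ) + x * (starRingEnd ℂ) y)
          = ((-(((‖x‖) ^ 2 + (‖y‖) ^ 2) / 2 : ℝ) : ℂ)) + z from by
        rw [hz]; push_cast; ring]
      rw [Complex.exp_add]
      ring
    have habs : ‖ginibreKernelN N x y - ginibreKernelInf x y‖
        = 1 / Real.pi * Real.exp (-((‖x‖ ^ 2 + ‖y‖ ^ 2) / 2)) *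
          ‖(∑ l ∈ Finset.range N, z ^ l / ((l.factorial : ℕ) : ℂ)) - Complex.exp z‖ := by
      rw [hdiff, norm_mul, norm_mul, Complex.norm_real, Real.norm_eq_abs, Complex.norm_exp, Complex.neg_re,
        Complex.ofReal_re, abs_of_pos (by positivity)]
    rw [habs]
    set T := ‖(∑ l ∈ Finset.range N, z ^ l / ((l.factorial : ℕ) : ℂ)) - Complex.exp z‖
      with hT
    have hT0 : 0 ≤ T := norm_nonneg _
    have hr : Real.exp (-((‖x‖ ^ 2 + ‖y‖ ^ 2) / 2)) ≤ Real.exp (-s) := by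
      apply Real.exp_le_exp.mpr
      rw [hsxy]
      have h := two_mul_le_add_sq (‖x‖) (‖y‖)
      linarith
    -- step 4: exp(-s) s^N ≤ exp(-a) a^N
    have hstep4 : Real.exp (-s) * s ^ N ≤ Real.exp (-a) * a ^ N := by
      have hsle : s ^ N ≤ a ^ N * Real.exp (s - a) := by
        have h5 : s ≤ a * Real.exp ((s - a) / N) := by
          have h6 : s - a ≤ a * (s - a) / N := by
            rw [le_div_iff₀ hNpos]
            nlinarith [mul_nonneg (sub_nonneg.mpr haN) (sub_nonneg.mpr hsa)]
          have h7 : 1 + (s - a) / N ≤ Real.exp ((s - a) / N) := by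
            have := Real.add_one_le_exp ((s - a) / N)
            linarith
          calc s = a + (s - a) := by ring
            _ ≤ a + a * (s - a) / N := by linarith
            _ = a * (1 + (s - a) / N) := by ring
            _ ≤ a * Real.exp ((s - a) / N) := mul_le_mul_of_nonneg_left h7 ha0
        calc s ^ N ≤ (a * Real.exp ((s - a) / N)) ^ N := pow_le_pow_left₀ hs0 h5 N
          _ = a ^ N * (Real.exp ((s - a) / N)) ^ N := mul_pow _ _ _
          _ = a ^ N * Real.exp (s - a) := by
              rw [← Real.exp_nat_mul]
              congr 1
              field_simp
      calc Real.exp (-s) * s ^ N ≤ Real.exp (-s) * (a ^ N * Real.exp (s - a)) :=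
            mul_le_mul_of_nonneg_left hsle (Real.exp_nonneg _)
        _ = Real.exp (-s) * Real.exp (s - a) * a ^ N := by ring
        _ = Real.exp (-a) * a ^ N := by rw [← Real.exp_add]; ring_nf
    -- step 5
    have hfac : ((N : ℝ)) ^ N ≤ (N.factorial : ℝ) * Real.exp N := by
      have hterm : (N : ℝ) ^ N / (N.factorial : ℝ)
          ≤ ∑ i ∈ Finset.range (N + 1), (N : ℝ) ^ i / (i.factorial : ℝ) :=
        Finset.single_le_sum (f := fun i => (N : ℝ) ^ i / (i.factorial : ℝ))
          (fun i _ => by positivity) (Finset.self_mem_range_succ N)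
      have hsum' := Real.sum_le_exp_of_nonneg (Nat.cast_nonneg N) (N + 1)
      have h := le_trans hterm hsum'
      rw [div_le_iff₀ (by positivity)] at h
      linarith
    have hbase : (1 - ε) * Real.exp ε ≤ Real.exp (-(ε ^ 2) / 2) := by
      have hlog := log_key ε hε0.le hε1
      have h1 : (1 - ε) ≤ Real.exp (-ε - ε ^ 2 / 2) := by
        rw [← Real.exp_log (show (0:ℝ) < 1 - ε by linarith)]
        exact Real.exp_le_exp.mpr (by linarith)
      calc (1 - ε) * Real.exp ε ≤ Real.exp (-ε - ε ^ 2 / 2) * Real.exp ε :=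
            mul_le_mul_of_nonneg_right h1 (Real.exp_nonneg _)
        _ = Real.exp (-(ε ^ 2) / 2) := by rw [← Real.exp_add]; ring_nf
    have hstep5 : Real.exp (-a) * a ^ N / (N.factorial : ℝ) ≤ Real.exp (-(ε ^ 2) * N / 2) := by
      have h1 : Real.exp (-a) * a ^ N / (N.factorial : ℝ)
          ≤ Real.exp (-a) * (1 - ε) ^ N * Real.exp N := by
        rw [ha, mul_pow]
        rw [div_le_iff₀ (by positivity)]
        calc Real.exp (-((1 - ε) * N)) * ((1 - ε) ^ N * (N : ℝ) ^ N)
            ≤ Real.exp (-((1 - ε) * N)) * ((1 - ε) ^ N * ((N.factorial : ℝ) * Real.exp N)) := by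
              apply mul_le_mul_of_nonneg_left _ (Real.exp_nonneg _)
              exact mul_le_mul_of_nonneg_left hfac (by positivity)
          _ = Real.exp (-((1 - ε) * N)) * (1 - ε) ^ N * Real.exp N * (N.factorial : ℝ) := by ring
      have h2 : Real.exp (-a) * (1 - ε) ^ N * Real.exp N = ((1 - ε) * Real.exp ε) ^ N := by
        rw [mul_pow, ← Real.exp_nat_mul,
          show (N:ℝ) * ε = -a + N by rw [ha]; ring, Real.exp_add]
        ring
      have h3 : ((1 - ε) * Real.exp ε) ^ N ≤ (Real.exp (-(ε ^ 2) / 2)) ^ N :=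
        pow_le_pow_left₀ (by positivity) hbase N
      have h4 : (Real.exp (-(ε ^ 2) / 2)) ^ N = Real.exp (-(ε ^ 2) * N / 2) := by
        rw [← Real.exp_nat_mul]
        congr 1
        ring
      linarith [h1, h2 ▸ h3, h4 ▸ (h2 ▸ h3)]
    -- assemble
    calc 1 / Real.pi * Real.exp (-((‖x‖ ^ 2 + ‖y‖ ^ 2) / 2)) * T
        ≤ 1 / Real.pi * (Real.exp (-s) * (s ^ N / (N.factorial : ℝ) * ε⁻¹)) := by
          rw [mul_assoc]
          apply mul_le_mul_of_nonneg_left _ (by positivity)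
          exact mul_le_mul hr habs_tail hT0 (Real.exp_nonneg _)
      _ = 1 / (Real.pi * ε) * (Real.exp (-s) * s ^ N / (N.factorial : ℝ)) := by
          field_simp
          try ring
          try tauto
      _ ≤ 1 / (Real.pi * ε) * (Real.exp (-a) * a ^ N / (N.factorial : ℝ)) := by
          apply mul_le_mul_of_nonneg_left _ (by positivity)
          gcongr
      _ ≤ 1 / (Real.pi * ε) * Real.exp (-(ε ^ 2) * N / 2) :=
          mul_le_mul_of_nonneg_left hstep5 (by positivity)
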